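/- Let r and m be positive integers with r dividing m and m/r even, let q = p^m for a prime p, and let k be an integer with 3 ≤ k ≤ p^r/2. Let S = {a_1, …, a_{2k}} be a set of 2k distinct elements of F_q all lying in the subfield of F_q with p^r elements (equivalently, a^{p^r} = a for every a ∈ S) and satisfying Σ_{i=1}^{2k} a_i ≠ 0. Set λ = (−Σ_{i=1}^{2k} a_i)^{−1}. Then each λ·u_i is a square in F_q, and for any choice of square roots v_i ∈ F_q^* with v_i² = λ·u_i (1 ≤ i ≤ 2k), the code C_k(S,v,∞) is a [2k+1,k]_q almost self-dual code (self-orthogonal of dimension k), and it is either an MDS code or an NMDS code. -/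

import Mathlib

open Polynomial Finset

noncomputable section
open scoped Classical

/-- Hamming weight of a vector. -/
def wt {F : Type*} [Field F] {N : ℕ} (w : Fin N → F) : ℕ := Set.ncard {i | w i ≠ 0}

/-- The code `C_k(S,v,∞)` as a set of vectors of length `n+1`. -/
def codeSet {F : Type*} [Field F] {n : ℕ} (a v : Fin n → F) (k : ℕ) :
    Set (Fin (n + 1) → F) :=
  {w | ∃ f : F[X], f.natDegree ≤ k ∧ f.coeff (k - 1) = 0 ∧
    w = Fin.snoc (fun i => v i * f.eval (a i)) (f.coeff k)}

/-- The Euclidean dual of a set of vectors. -/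
def dualSet {F : Type*} [Field F] {N : ℕ} (C : Set (Fin N → F)) : Set (Fin N → F) :=
  {y | ∀ x ∈ C, ∑ i, x i * y i = 0}

/-- A (nonzero) code has minimum distance `d`: some nonzero codeword has weight `d`
and every nonzero codeword has weight at least `d`. -/
def IsMinDist {F : Type*} [Field F] {N : ℕ} (C : Set (Fin N → F)) (d : ℕ) : Prop :=
  (∃ w ∈ C, w ≠ 0 ∧ wt w = d) ∧ ∀ w ∈ C, w ≠ 0 → d ≤ wt w

/-- `u i = ∏_{j ≠ i} (a i - a j)⁻¹`. -/
def uCoeff {F : Type*} [Field F] {n : ℕ} (a : Fin n → F) (i : Fin n) : F :=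
  ∏ j ∈ Finset.univ.erase i, (a i - a j)⁻¹

/-- The set of Schur (componentwise) products of elements of two codes. -/
def schurSet {F : Type*} [Field F] {N : ℕ} (C D : Set (Fin N → F)) : Set (Fin N → F) :=
  {w | ∃ c ∈ C, ∃ d ∈ D, w = c * d}


/-! ### Auxiliary lemmas -/

lemma charP_of_card {F : Type*} [Field F] [Fintype F] {p m : ℕ} (hp : p.Prime) (hm : 0 < m)
    (hcard : Fintype.card F = p ^ m) : CharP F p := by
  obtain ⟨n, hq, hc⟩ := FiniteField.card F (ringChar F)
  have hd : p ∣ ringChar F := hp.dvd_of_dvd_pow (n := (n:ℕ)) (by rw [← hc, hcard]; exact dvd_pow_self p hm.ne')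
  rw [(Nat.prime_dvd_prime_iff_eq hp hq).mp hd]; exact ringChar.charP F

lemma exists_sqrt_of_fixed {F : Type*} [Field F] [Fintype F] {p r m : ℕ} (hp : p.Prime)
    (hr : 0 < r) (hm : 0 < m) (hrm : r ∣ m) (heven : 2 ∣ m / r)
    (hcard : Fintype.card F = p ^ m) (x : F) (hx : x ^ (p ^ r) = x) :
    ∃ w : F, w ^ 2 = x := by
  haveI := charP_of_card hp hm hcard
  suffices h : IsSquare x by
    obtain ⟨w, hw⟩ := h
    exact ⟨w, by rw [sq]; exact hw.symm⟩
  have hring : ringChar F = p := ringChar.eq_iff.mpr ‹CharP F p›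
  by_cases hp2 : p = 2
  · exact FiniteField.isSquare_of_char_two (by rw [hring, hp2]) x
  rcases eq_or_ne x 0 with rfl | hx0
  · exact IsSquare.zero
  rw [FiniteField.isSquare_iff (by rw [hring]; exact hp2) hx0]
  have hpr1 : (1:ℕ) ≤ p ^ r := Nat.one_le_pow _ _ hp.pos
  have hxu : x ^ (p ^ r - 1) = 1 := by
    have h2 : x ^ (p ^ r - 1) * x = 1 * x := by
      rw [← pow_succ, Nat.sub_add_cancel hpr1, hx, one_mul]
    exact mul_right_cancel₀ hx0 h2
  obtain ⟨s, hs⟩ := hrm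
  obtain ⟨t, ht⟩ := heven
  have hsval : s = m / r := by rw [hs, Nat.mul_div_cancel_left _ hr]
  have hm2 : m = 2 * r * t := by rw [hs, hsval, ht]; ring
  have hpodd : Odd p := hp.odd_of_ne_two hp2
  have hdvd1 : p ^ (2*r) - 1 ∣ p ^ m - 1 := by
    have he : p ^ m - 1 = (p ^ (2*r)) ^ t - 1 ^ t := by rw [hm2, pow_mul, one_pow]
    rw [he]; exact Nat.sub_dvd_pow_sub_pow _ 1 t
  have h1' : 1 ≤ p ^ r * p ^ r := Nat.one_le_iff_ne_zero.mpr (by positivity)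
  have hfac : p ^ (2*r) - 1 = (p ^ r - 1) * (p ^ r + 1) := by
    have hsq : p ^ (2*r) = p ^ r * p ^ r := by rw [two_mul, pow_add]
    rw [hsq]
    zify [hpr1, h1']
    ring
  have h2dvd : 2 ∣ p ^ r + 1 := by
    obtain ⟨w0, hw0⟩ : Odd (p ^ r) := hpodd.pow
    omega
  obtain ⟨u, hu⟩ := h2dvd
  have hkey : ∃ d, p ^ m - 1 = 2 * ((p ^ r - 1) * d) := by
    obtain ⟨e, he⟩ := hdvd1
    refine ⟨u * e, ?_⟩
    rw [he, hfac, hu]; ring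
  obtain ⟨d, hd⟩ := hkey
  have hpm : Odd (p ^ m) := hpodd.pow
  obtain ⟨w, hw⟩ := hpm
  have hcard2 : Fintype.card F / 2 = (p ^ r - 1) * d := by
    rw [hcard]; omega
  rw [hcard2, pow_mul, hxu, one_pow]

lemma basis_coeff {F : Type*} [Field F] {n : ℕ} (a : Fin n → F) (i : Fin n) :
    (Lagrange.basis Finset.univ a i).coeff (n - 1) = uCoeff a i := by
  rw [Lagrange.basis, uCoeff]
  have : ∀ j ∈ Finset.univ.erase i, Lagrange.basisDivisor (a i) (a j)
      = C ((a i - a j)⁻¹) * (X - C (a j)) := fun j _ => rfl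
  rw [Finset.prod_congr rfl this, Finset.prod_mul_distrib, ← map_prod]
  have hmon : (∏ j ∈ Finset.univ.erase i, (X - C (a j))).Monic :=
    monic_prod_of_monic _ _ (fun j _ => monic_X_sub_C _)
  have hdeg : (∏ j ∈ Finset.univ.erase i, (X - C (a j))).natDegree = n - 1 := by
    rw [natDegree_prod_of_monic _ _ (fun j _ => monic_X_sub_C _)]
    simp [Finset.card_erase_of_mem]
  rw [coeff_C_mul, ← hdeg, hmon.coeff_natDegree, mul_one]

lemma sum_uCoeff_eval {F : Type*} [Field F] {n : ℕ} (hn : 0 < n) (a : Fin n → F)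
    (ha : Function.Injective a) (h : Polynomial F) (hd : h.natDegree ≤ n) :
    ∑ i, uCoeff a i * h.eval (a i) = h.coeff (n - 1) + h.coeff n * ∑ i, a i := by
  set P : Polynomial F := ∏ j : Fin n, (X - C (a j)) with hP
  have hPmon : P.Monic := monic_prod_of_monic _ _ (fun j _ => monic_X_sub_C _)
  have hPdeg : P.natDegree = n := by
    rw [hP, natDegree_prod_of_monic _ _ (fun j _ => monic_X_sub_C _)]
    simp
  set g : Polynomial F := h - C (h.coeff n) * P with hg
  have hgdeg : g.degree < (n : WithBot ℕ) := by
    rw [degree_lt_iff_coeff_zero]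
    intro m hm
    rw [hg, coeff_sub, coeff_C_mul]
    rcases eq_or_lt_of_le hm with rfl | hm'
    · rw [← hPdeg, hPmon.coeff_natDegree, mul_one, sub_self]
    · have e1 : h.coeff m = 0 := coeff_eq_zero_of_natDegree_lt (lt_of_le_of_lt hd hm')
      have e2 : P.coeff m = 0 := coeff_eq_zero_of_natDegree_lt (by rw [hPdeg]; exact hm')
      rw [e1, e2, mul_zero, sub_zero]
  have hinterp := Lagrange.eq_interpolate (f := g) (v := a) (s := Finset.univ)
    (Function.Injective.injOn ha) (by simpa using hgdeg)
  have hPeval : ∀ i : Fin n, P.eval (a i) = 0 := by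
    intro i
    rw [hP, eval_prod]
    exact Finset.prod_eq_zero (Finset.mem_univ i) (by simp)
  have hgeval : ∀ i : Fin n, g.eval (a i) = h.eval (a i) := by
    intro i; rw [hg]; simp [hPeval i]
  have hcoeff : g.coeff (n - 1) = ∑ i, uCoeff a i * h.eval (a i) := by
    conv_lhs => rw [hinterp]
    rw [Lagrange.interpolate_apply, finset_sum_coeff]
    refine Finset.sum_congr rfl (fun i _ => ?_)
    rw [coeff_C_mul, basis_coeff a i, hgeval i, mul_comm]
  have hPc : P.coeff (n - 1) = -∑ i, a i := by
    have := prod_X_sub_C_coeff_card_pred (Finset.univ : Finset (Fin n)) a (by simpa using hn)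
    simpa using this
  have hgc : g.coeff (n - 1) = h.coeff (n - 1) + h.coeff n * ∑ i, a i := by
    rw [hg, coeff_sub, coeff_C_mul, hPc]
    ring
  rw [← hcoeff, hgc]

lemma moments_zero {F : Type*} [Field F] {ι : Type*} [DecidableEq ι] (T : Finset ι)
    (b : ι → F) (hb : Set.InjOn b T) (c : ι → F) {K : ℕ} (hT : T.card ≤ K)
    (hmom : ∀ j < K, ∑ i ∈ T, c i * b i ^ j = 0) :
    ∀ i ∈ T, c i = 0 := by
  intro i0 hi0
  set P : Polynomial F := ∏ j ∈ T.erase i0, (X - C (b j)) with hP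
  have hPdeg : P.natDegree = T.card - 1 := by
    rw [hP, natDegree_prod_of_monic _ _ (fun j _ => monic_X_sub_C _)]
    simp [Finset.card_erase_of_mem hi0]
  have hcpos : 1 ≤ T.card := Finset.card_pos.mpr ⟨i0, hi0⟩
  have hPlt : P.natDegree < K := by omega
  have key : ∑ i ∈ T, c i * P.eval (b i) = 0 := by
    have expand : ∀ i ∈ T, c i * P.eval (b i)
        = ∑ j ∈ Finset.range K, P.coeff j * (c i * b i ^ j) := by
      intro i _
      rw [eval_eq_sum_range' hPlt (b i), Finset.mul_sum]
      exact Finset.sum_congr rfl (fun j _ => by ring)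
    rw [Finset.sum_congr rfl expand, Finset.sum_comm]
    refine Finset.sum_eq_zero (fun j hj => ?_)
    rw [← Finset.mul_sum, hmom j (Finset.mem_range.mp hj), mul_zero]
  have hvanish : ∀ i ∈ T, i ≠ i0 → c i * P.eval (b i) = 0 := by
    intro i hi hne
    have : P.eval (b i) = 0 := by
      rw [hP, eval_prod]
      exact Finset.prod_eq_zero (Finset.mem_erase.mpr ⟨hne, hi⟩) (by simp)
    rw [this, mul_zero]
  have hsingle : ∑ i ∈ T, c i * P.eval (b i) = c i0 * P.eval (b i0) :=
    Finset.sum_eq_single i0 (fun i hi hne => hvanish i hi hne) (fun h => absurd hi0 h)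
  have hPne : P.eval (b i0) ≠ 0 := by
    rw [hP, eval_prod]
    refine Finset.prod_ne_zero_iff.mpr (fun j hj => ?_)
    obtain ⟨hne, hjT⟩ := Finset.mem_erase.mp hj
    simp only [eval_sub, eval_X, eval_C, sub_ne_zero]
    exact fun hbe => hne (hb hjT hi0 hbe.symm)
  have := hsingle.symm.trans key
  exact (mul_eq_zero.mp this).resolve_right hPne

/-! ### The polynomial space parametrization -/

def polyOf {F : Type*} [Field F] (k : ℕ) (c : Fin k → F) : F[X] :=
  ∑ j : Fin k, C (c j) * X ^ (if (j : ℕ) = k - 1 then k else (j : ℕ))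

lemma polyOf_coeff {F : Type*} [Field F] (k : ℕ) (c : Fin k → F) (t : ℕ) :
    (polyOf k c).coeff t = ∑ j : Fin k,
      c j * (if t = (if (j : ℕ) = k - 1 then k else (j : ℕ)) then 1 else 0) := by
  rw [polyOf, finset_sum_coeff]
  exact Finset.sum_congr rfl (fun j _ => by rw [coeff_C_mul, coeff_X_pow])

lemma polyOf_natDegree_le {F : Type*} [Field F] (k : ℕ) (c : Fin k → F) :
    (polyOf k c).natDegree ≤ k := by
  refine natDegree_sum_le_of_forall_le _ _ (fun j _ => ?_)
  refine le_trans (natDegree_C_mul_le _ _) ?_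
  rw [natDegree_X_pow]
  split <;> omega

lemma polyOf_coeff_lt {F : Type*} [Field F] (k : ℕ) (c : Fin k → F) (t : ℕ) (ht : t < k - 1) :
    (polyOf k c).coeff t = c ⟨t, by omega⟩ := by
  rw [polyOf_coeff]
  rw [Finset.sum_eq_single (⟨t, by omega⟩ : Fin k)]
  · simp only []
    have : ¬ (t = k - 1) := by omega
    simp [this]
  · intro j _ hj
    have hj' : (j : ℕ) ≠ t := fun h => hj (Fin.ext h)
    split
    · have : ¬ (t = k) := by omega
      simp [this]
    · simp only [ite_eq_right_iff, one_ne_zero, imp_false, mul_ite, mul_one, mul_zero]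
      intro h2; exact (hj' h2.symm).elim
  · intro h; exact absurd (Finset.mem_univ _) h

lemma polyOf_coeff_pred {F : Type*} [Field F] (k : ℕ) (hk : 2 ≤ k) (c : Fin k → F) :
    (polyOf k c).coeff (k - 1) = 0 := by
  rw [polyOf_coeff]
  refine Finset.sum_eq_zero (fun j _ => ?_)
  split
  · have : ¬ (k - 1 = k) := by omega
    simp [this]
  · next h =>
      simp only [mul_ite, mul_one, mul_zero, ite_eq_right_iff]
      intro h2; exact (h h2.symm).elim

lemma polyOf_coeff_top {F : Type*} [Field F] (k : ℕ) (hk : 1 ≤ k) (c : Fin k → F) :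
    (polyOf k c).coeff k = c ⟨k - 1, by omega⟩ := by
  rw [polyOf_coeff]
  rw [Finset.sum_eq_single (⟨k - 1, by omega⟩ : Fin k)]
  · simp
  · intro j _ hj
    have hj' : (j : ℕ) ≠ k - 1 := fun h => hj (Fin.ext h)
    have hjk : (j : ℕ) ≠ k := by omega
    simp only [hj', if_false, mul_ite, mul_one, mul_zero, ite_eq_right_iff]
    intro h2; exact (hjk h2.symm).elim
  · intro h; exact absurd (Finset.mem_univ _) h

lemma polyOf_eq_of {F : Type*} [Field F] (k : ℕ) (hk : 2 ≤ k) (f : F[X]) (hdeg : f.natDegree ≤ k)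
    (hcp : f.coeff (k - 1) = 0) :
    polyOf k (fun j => if (j : ℕ) = k - 1 then f.coeff k else f.coeff j) = f := by
  ext t
  rcases Nat.lt_or_ge t k with h | h
  · rcases Nat.lt_or_ge t (k - 1) with h1 | h1
    · rw [polyOf_coeff_lt k _ t h1]
      have : ¬ ((t : ℕ) = k - 1) := by omega
      simp [this]
    · have ht : t = k - 1 := by omega
      rw [ht, polyOf_coeff_pred k hk, hcp]
  · rcases Nat.eq_or_lt_of_le h with rfl | h2
    · rw [polyOf_coeff_top k (by omega)]
      simp
    · rw [coeff_eq_zero_of_natDegree_lt (lt_of_le_of_lt (polyOf_natDegree_le _ _) h2),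
        coeff_eq_zero_of_natDegree_lt (lt_of_le_of_lt hdeg h2)]

lemma polyOf_add {F : Type*} [Field F] (k : ℕ) (c c' : Fin k → F) :
    polyOf k (c + c') = polyOf k c + polyOf k c' := by
  rw [polyOf, polyOf, polyOf, ← Finset.sum_add_distrib]
  exact Finset.sum_congr rfl (fun j _ => by rw [Pi.add_apply, map_add, add_mul])

lemma polyOf_smul {F : Type*} [Field F] (k : ℕ) (s : F) (c : Fin k → F) :
    polyOf k (s • c) = C s * polyOf k c := by
  rw [polyOf, polyOf, Finset.mul_sum]
  exact Finset.sum_congr rfl (fun j _ => by rw [Pi.smul_apply, smul_eq_mul, map_mul, mul_assoc])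

/-- The codeword map as a linear map. -/
def Lmap {F : Type*} [Field F] (k : ℕ) (a v : Fin (2*k) → F) :
    (Fin k → F) →ₗ[F] (Fin (2*k+1) → F) where
  toFun c := Fin.snoc (fun i => v i * (polyOf k c).eval (a i)) ((polyOf k c).coeff k)
  map_add' c c' := by
    funext idx
    refine Fin.lastCases ?_ (fun i => ?_) idx
    · simp [Fin.snoc_last, polyOf_add]
    · simp [Fin.snoc_castSucc, polyOf_add]; ring
  map_smul' s c := by
    funext idx
    refine Fin.lastCases ?_ (fun i => ?_) idx
    · simp [Fin.snoc_last, polyOf_smul]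
    · simp [Fin.snoc_castSucc, polyOf_smul]; ring

lemma Lmap_castSucc {F : Type*} [Field F] (k : ℕ) (a v : Fin (2*k) → F) (c : Fin k → F)
    (i : Fin (2*k)) :
    Lmap k a v c i.castSucc = v i * (polyOf k c).eval (a i) := by
  simp [Lmap, Fin.snoc_castSucc]

lemma Lmap_last {F : Type*} [Field F] (k : ℕ) (a v : Fin (2*k) → F) (c : Fin k → F) :
    Lmap k a v c (Fin.last (2*k)) = (polyOf k c).coeff k := by
  simp [Lmap, Fin.snoc_last]

lemma codeSet_eq_range {F : Type*} [Field F] (k : ℕ) (hk : 2 ≤ k) (a v : Fin (2*k) → F) :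
    codeSet a v k = Set.range (Lmap k a v) := by
  ext w
  constructor
  · rintro ⟨f, hdeg, hcp, rfl⟩
    refine ⟨fun j => if (j : ℕ) = k - 1 then f.coeff k else f.coeff j, ?_⟩
    show (Fin.snoc (fun i => v i * (polyOf k (fun j => if (j : ℕ) = k - 1 then f.coeff k else f.coeff j)).eval (a i)) ((polyOf k (fun j => if (j : ℕ) = k - 1 then f.coeff k else f.coeff j)).coeff k) : Fin (2*k+1) → F) = _
    rw [polyOf_eq_of k hk f hdeg hcp]
  · rintro ⟨c, rfl⟩
    exact ⟨polyOf k c, polyOf_natDegree_le k c, polyOf_coeff_pred k hk c, rfl⟩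

lemma polyOf_eq_zero {F : Type*} [Field F] (k : ℕ) (hk : 2 ≤ k) (c : Fin k → F)
    (h : polyOf k c = 0) : c = 0 := by
  funext j
  rcases Nat.lt_or_ge (j : ℕ) (k - 1) with hj | hj
  · have := polyOf_coeff_lt k c (j : ℕ) hj
    rw [h, coeff_zero] at this
    simpa using this.symm
  · have hje : (j : ℕ) = k - 1 := by have := j.isLt; omega
    have := polyOf_coeff_top k (by omega) c
    rw [h, coeff_zero] at this
    have hj' : j = ⟨k - 1, by omega⟩ := Fin.ext (by simpa using hje)
    rw [hj']
    simpa using this.symm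

lemma Lmap_injective {F : Type*} [Field F] (k : ℕ) (hk : 3 ≤ k) (a v : Fin (2*k) → F)
    (ha : Function.Injective a) (hv : ∀ i, v i ≠ 0) :
    Function.Injective (Lmap k a v) := by
  rw [← LinearMap.ker_eq_bot]
  rw [LinearMap.ker_eq_bot']
  intro c hc
  have heval : ∀ i : Fin (2*k), (polyOf k c).eval (a i) = 0 := by
    intro i
    have : Lmap k a v c i.castSucc = 0 := by rw [hc]; rfl
    rw [Lmap_castSucc] at this
    exact (mul_eq_zero.mp this).resolve_left (hv i)
  have hz : polyOf k c = 0 := by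
    refine eq_zero_of_natDegree_lt_card_of_eval_eq_zero _ ha heval ?_
    rw [Fintype.card_fin]
    have := polyOf_natDegree_le k c
    omega
  exact polyOf_eq_zero k (by omega) c hz

/-! ### Weight lemmas -/

lemma wt_eq {F : Type*} [Field F] {N : ℕ} (w : Fin N → F) :
    wt w = (Finset.univ.filter fun i => w i ≠ 0).card := by
  rw [wt, Set.ncard_eq_toFinset_card']
  congr 1
  ext i
  simp

lemma wt_split {F : Type*} [Field F] {n : ℕ} (w : Fin (n+1) → F) :
    wt w = (Finset.univ.filter fun i : Fin n => w i.castSucc ≠ 0).card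
      + (if w (Fin.last n) ≠ 0 then 1 else 0) := by
  rw [wt_eq, Finset.card_filter, Finset.card_filter, Fin.sum_univ_castSucc]

lemma eval_zero_card_le {F : Type*} [Field F] {n : ℕ} (a : Fin n → F)
    (ha : Function.Injective a) (f : F[X]) (hf : f ≠ 0) :
    (Finset.univ.filter fun i : Fin n => f.eval (a i) = 0).card ≤ f.natDegree := by
  have h1 : (Finset.univ.filter fun i : Fin n => f.eval (a i) = 0).card
      ≤ f.roots.toFinset.card := by
    refine Finset.card_le_card_of_injOn a (fun i hi => ?_) (ha.injOn)
    rw [Finset.mem_coe, Multiset.mem_toFinset, mem_roots hf]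
    exact (Finset.mem_filter.mp hi).2
  refine h1.trans ((Multiset.toFinset_card_le _).trans (card_roots' f))

lemma wt_lower {F : Type*} [Field F] (k : ℕ) (hk : 3 ≤ k) (a v : Fin (2*k) → F)
    (ha : Function.Injective a) (hv : ∀ i, v i ≠ 0) (c : Fin k → F) (hc : c ≠ 0) :
    k + 1 ≤ wt (Lmap k a v c) ∧ (c ⟨k-1, by omega⟩ = 0 → k + 2 ≤ wt (Lmap k a v c)) := by
  set f := polyOf k c with hf
  have hfne : f ≠ 0 := fun h => hc (polyOf_eq_zero k (by omega) c h)
  set w := Lmap k a v c with hw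
  have hfilter : (Finset.univ.filter fun i : Fin (2*k) => w i.castSucc ≠ 0)
      = (Finset.univ.filter fun i : Fin (2*k) => ¬ (f.eval (a i) = 0)) := by
    refine Finset.filter_congr (fun i _ => ?_)
    rw [hw, Lmap_castSucc]
    constructor
    · intro h h2; exact h (by rw [h2, mul_zero])
    · intro h h2; exact h ((mul_eq_zero.mp h2).resolve_left (hv i))
  have hcards : (Finset.univ.filter fun i : Fin (2*k) => f.eval (a i) = 0).card
      + (Finset.univ.filter fun i : Fin (2*k) => ¬ (f.eval (a i) = 0)).card = 2*k := by
    rw [Finset.card_filter_add_card_filter_not]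
    simp
  have hZ := eval_zero_card_le a ha f hfne
  have hwsplit := wt_split w
  rw [hfilter] at hwsplit
  have hlast : w (Fin.last (2*k)) = c ⟨k-1, by omega⟩ := by
    rw [hw, Lmap_last, polyOf_coeff_top k (by omega)]
  constructor
  · by_cases hck : c ⟨k-1, by omega⟩ = 0
    · have hdeg : f.natDegree ≤ k - 2 := by
        rw [natDegree_le_iff_coeff_eq_zero]
        intro N hN
        rcases Nat.lt_or_ge N (k-1) with h1 | h1
        · omega
        rcases Nat.eq_or_lt_of_le h1 with h15 | h2
        · rw [← h15, hf]; exact polyOf_coeff_pred k (by omega) c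
        rcases Nat.eq_or_lt_of_le h2 with h3 | h3
        · have : N = k := by omega
          rw [this, hf, polyOf_coeff_top k (by omega)]; exact hck
        · exact coeff_eq_zero_of_natDegree_lt (lt_of_le_of_lt (polyOf_natDegree_le k c) (by omega))
      have : (Finset.univ.filter fun i : Fin (2*k) => f.eval (a i) = 0).card ≤ k - 2 :=
        hZ.trans hdeg
      omega
    · have hdeg : f.natDegree ≤ k := polyOf_natDegree_le k c
      have h1 : (Finset.univ.filter fun i : Fin (2*k) => f.eval (a i) = 0).card ≤ k :=
        hZ.trans hdeg
      have h2 : w (Fin.last (2*k)) ≠ 0 := by rw [hlast]; exact hck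
      rw [if_pos h2] at hwsplit
      omega
  · intro hck
    have hdeg : f.natDegree ≤ k - 2 := by
      rw [natDegree_le_iff_coeff_eq_zero]
      intro N hN
      rcases Nat.lt_or_ge N (k-1) with h1 | h1
      · omega
      rcases Nat.eq_or_lt_of_le h1 with h15 | h2
      · rw [← h15, hf]; exact polyOf_coeff_pred k (by omega) c
      rcases Nat.eq_or_lt_of_le h2 with h3 | h3
      · have : N = k := by omega
        rw [this, hf, polyOf_coeff_top k (by omega)]; exact hck
      · exact coeff_eq_zero_of_natDegree_lt (lt_of_le_of_lt (polyOf_natDegree_le k c) (by omega))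
    have : (Finset.univ.filter fun i : Fin (2*k) => f.eval (a i) = 0).card ≤ k - 2 :=
      hZ.trans hdeg
    omega

lemma exists_low_weight {F : Type*} [Field F] (k : ℕ) (hk : 3 ≤ k) (a v : Fin (2*k) → F) :
    ∃ c : Fin k → F, c ≠ 0 ∧ wt (Lmap k a v c) ≤ k + 2 := by
  set emb : Fin (k-1) → Fin (2*k+1) := fun t => Fin.castSucc ⟨(t : ℕ), by omega⟩ with hemb
  have hembinj : Function.Injective emb := by
    intro t1 t2 h
    rw [hemb] at h
    simp only [Fin.castSucc_inj, Fin.mk.injEq] at h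
    exact Fin.ext h
  set E : (Fin k → F) →ₗ[F] (Fin (k-1) → F) :=
    (LinearMap.funLeft F F emb).comp (Lmap k a v) with hE
  have hnotinj : ¬ Function.Injective E := by
    intro hinj
    have := LinearMap.finrank_le_finrank_of_injective hinj
    rw [Module.finrank_pi, Module.finrank_pi, Fintype.card_fin, Fintype.card_fin] at this
    omega
  rw [injective_iff_map_eq_zero'] at hnotinj
  push_neg at hnotinj
  obtain ⟨c, hc⟩ := hnotinj
  rcases hc with ⟨hc0, hcne⟩ | ⟨hcne, hc0⟩
  swap
  · exact absurd (by rw [hc0, map_zero]) hcne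
  refine ⟨c, hcne, ?_⟩
  have hzero : ∀ t : Fin (k-1), Lmap k a v c (emb t) = 0 := by
    intro t
    have : E c t = 0 := by rw [hc0]; rfl
    exact this
  rw [wt_eq]
  have hsub : (Finset.univ.filter fun i => Lmap k a v c i ≠ 0)
      ⊆ Finset.univ \ (Finset.univ.image emb) := by
    intro i hi
    rw [Finset.mem_sdiff]
    refine ⟨Finset.mem_univ _, fun hmem => ?_⟩
    obtain ⟨t, _, rfl⟩ := Finset.mem_image.mp hmem
    exact (Finset.mem_filter.mp hi).2 (hzero t)
  have hcard := Finset.card_le_card hsub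
  rw [Finset.card_sdiff_of_subset (Finset.subset_univ _), Finset.card_image_of_injective _ hembinj] at hcard
  simp only [Finset.card_univ, Fintype.card_fin] at hcard
  omega

/-! ### Self-orthogonality -/

lemma coeff_mul_pred {F : Type*} [Field F] (k : ℕ) (hk : 3 ≤ k) (f g : F[X])
    (hf : f.natDegree ≤ k) (hfc : f.coeff (k-1) = 0) (hg : g.natDegree ≤ k)
    (hgc : g.coeff (k-1) = 0) :
    (f * g).coeff (2*k - 1) = 0 := by
  rw [coeff_mul]
  refine Finset.sum_eq_zero (fun x hx => ?_)
  have hxy : x.1 + x.2 = 2*k - 1 := Finset.HasAntidiagonal.mem_antidiagonal.mp hx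
  rcases Nat.lt_or_ge k x.1 with h1 | h1
  · rw [coeff_eq_zero_of_natDegree_lt (lt_of_le_of_lt hf h1), zero_mul]
  rcases Nat.lt_or_ge k x.2 with h2 | h2
  · rw [coeff_eq_zero_of_natDegree_lt (lt_of_le_of_lt hg h2), mul_zero]
  rcases Nat.eq_or_lt_of_le h1 with hk1 | hk1
  · have : x.2 = k - 1 := by omega
    rw [this, hgc, mul_zero]
  · have : x.1 = k - 1 := by omega
    rw [this, hfc, zero_mul]

lemma coeff_mul_top {F : Type*} [Field F] (k : ℕ) (f g : F[X])
    (hf : f.natDegree ≤ k) (hg : g.natDegree ≤ k) :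
    (f * g).coeff (2*k) = f.coeff k * g.coeff k := by
  rw [coeff_mul]
  rw [Finset.sum_eq_single ((k, k) : ℕ × ℕ)]
  · intro x hx hne
    have hxy : x.1 + x.2 = 2*k := Finset.HasAntidiagonal.mem_antidiagonal.mp hx
    rcases Nat.lt_or_ge k x.1 with h1 | h1
    · rw [coeff_eq_zero_of_natDegree_lt (lt_of_le_of_lt hf h1), zero_mul]
    rcases Nat.lt_or_ge k x.2 with h2 | h2
    · rw [coeff_eq_zero_of_natDegree_lt (lt_of_le_of_lt hg h2), mul_zero]
    exact absurd (Prod.ext (by omega) (by omega)) hne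
  · intro h
    exact absurd (Finset.HasAntidiagonal.mem_antidiagonal.mpr (by omega)) h

lemma self_orth {F : Type*} [Field F] (k : ℕ) (hk : 3 ≤ k) (a v : Fin (2*k) → F)
    (ha : Function.Injective a) (hsum : ∑ i, a i ≠ 0) (lam : F)
    (hlam : lam = (-(∑ i, a i))⁻¹) (hv2 : ∀ i, v i ^ 2 = lam * uCoeff a i)
    (f g : F[X]) (hf : f.natDegree ≤ k) (hfc : f.coeff (k-1) = 0)
    (hg : g.natDegree ≤ k) (hgc : g.coeff (k-1) = 0) :
    ∑ idx : Fin (2*k+1),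
      (Fin.snoc (fun i => v i * f.eval (a i)) (f.coeff k) : Fin (2*k+1) → F) idx
      * (Fin.snoc (fun i => v i * g.eval (a i)) (g.coeff k) : Fin (2*k+1) → F) idx = 0 := by
  rw [Fin.sum_univ_castSucc]
  simp only [Fin.snoc_castSucc, Fin.snoc_last]
  have hterm : ∀ i : Fin (2*k), (v i * f.eval (a i)) * (v i * g.eval (a i))
      = lam * (uCoeff a i * (f*g).eval (a i)) := by
    intro i
    have : (v i * f.eval (a i)) * (v i * g.eval (a i))
        = v i ^ 2 * (f.eval (a i) * g.eval (a i)) := by ring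
    rw [this, hv2 i, eval_mul]
    ring
  rw [Finset.sum_congr rfl (fun i _ => hterm i), ← Finset.mul_sum]
  have hdeg : (f * g).natDegree ≤ 2*k := le_trans (natDegree_mul_le) (by omega)
  rw [sum_uCoeff_eval (by omega) a ha (f*g) hdeg]
  rw [coeff_mul_pred k hk f g hf hfc hg hgc, coeff_mul_top k f g hf hg]
  rw [hlam]
  have hne : (-(∑ i, a i)) ≠ 0 := neg_ne_zero.mpr hsum
  field_simp
  ring

/-! ### Dual distance bounds -/

lemma dual_lb {F : Type*} [Field F] (k : ℕ) (hk : 3 ≤ k) (a v : Fin (2*k) → F)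
    (ha : Function.Injective a) (hv : ∀ i, v i ≠ 0)
    (y : Fin (2*k+1) → F) (hy : y ∈ dualSet (codeSet a v k)) (hwt : wt y < k) :
    y = 0 := by
  set T : Finset (Fin (2*k)) := Finset.univ.filter (fun i => y i.castSucc ≠ 0) with hT
  have hTcard : T.card ≤ k - 1 := by
    have h1 : T.card ≤ wt y := by
      rw [wt_eq]
      refine Finset.card_le_card_of_injOn Fin.castSucc (fun i hi => ?_)
        (Fin.castSucc_injective _).injOn
      rw [Finset.mem_coe, Finset.mem_filter]
      exact ⟨Finset.mem_univ _, (Finset.mem_filter.mp hi).2⟩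
    omega
  have hmem : ∀ j : ℕ, j ≤ k - 2 ∨ j = k →
      (Fin.snoc (fun i => v i * (X^j : F[X]).eval (a i)) ((X^j : F[X]).coeff k)
        : Fin (2*k+1) → F) ∈ codeSet a v k := by
    intro j hj
    refine ⟨X^j, by rw [natDegree_X_pow]; omega, ?_, rfl⟩
    rw [coeff_X_pow]
    have hne : ¬ (k-1 = j) := by omega
    simp [hne]
  have hdual : ∀ j : ℕ, j ≤ k - 2 ∨ j = k →
      ∑ i : Fin (2*k), (v i * (a i)^j) * y i.castSucc
        + (if k = j then 1 else 0) * y (Fin.last (2*k)) = 0 := by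
    intro j hj
    have := hy _ (hmem j hj)
    rw [Fin.sum_univ_castSucc] at this
    simp only [Fin.snoc_castSucc, Fin.snoc_last, eval_pow, eval_X, coeff_X_pow] at this
    exact this
  have hfirst : ∀ i : Fin (2*k), y i.castSucc = 0 := by
    have hmomzero : ∀ j, j < k - 1 → ∑ i ∈ T, (v i * y i.castSucc) * a i ^ j = 0 := by
      intro j hj
      have h0 := hdual j (Or.inl (by omega))
      have hkj : ¬ (k = j) := by omega
      rw [if_neg hkj, zero_mul, add_zero] at h0
      have hres : ∑ i ∈ T, (v i * (a i)^j) * y i.castSucc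
          = ∑ i : Fin (2*k), (v i * (a i)^j) * y i.castSucc := by
        refine Finset.sum_subset (Finset.subset_univ T) (fun i _ hiT => ?_)
        have : ¬ (y i.castSucc ≠ 0) := fun h => hiT (Finset.mem_filter.mpr ⟨Finset.mem_univ _, h⟩)
        push_neg at this
        rw [this, mul_zero]
      rw [← hres] at h0
      rw [← h0]
      exact Finset.sum_congr rfl (fun i _ => by ring)
    have := moments_zero T a (ha.injOn) (fun i => v i * y i.castSucc) (K := k-1) hTcard
      (fun j hj => hmomzero j hj)
    intro i
    by_cases hiT : i ∈ T
    · have := this i hiT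
      exact (mul_eq_zero.mp this).resolve_left (hv i)
    · have : ¬ (y i.castSucc ≠ 0) := fun h => hiT (Finset.mem_filter.mpr ⟨Finset.mem_univ _, h⟩)
      push_neg at this
      exact this
  have hlastz : y (Fin.last (2*k)) = 0 := by
    have h0 := hdual k (Or.inr rfl)
    rw [if_pos rfl, one_mul] at h0
    have : ∑ i : Fin (2*k), (v i * (a i)^k) * y i.castSucc = 0 :=
      Finset.sum_eq_zero (fun i _ => by rw [hfirst i, mul_zero])
    rw [this, zero_add] at h0
    exact h0
  funext idx
  refine Fin.lastCases ?_ (fun i => ?_) idx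
  · exact hlastz
  · exact hfirst i

lemma exists_dual_low {F : Type*} [Field F] (k : ℕ) (hk : 3 ≤ k) (a v : Fin (2*k) → F)
    (c0 : Fin k → F) (hc0 : c0 ≠ 0) (hwt : wt (Lmap k a v c0) = k + 1) :
    ∃ y : Fin (2*k+1) → F, y ∈ dualSet (codeSet a v k) ∧ y ≠ 0 ∧ wt y ≤ k := by
  set w := Lmap k a v c0 with hw
  set Zf : Finset (Fin (2*k+1)) := Finset.univ.filter (fun i => w i = 0) with hZf
  have hZcard : Zf.card = k := by
    have h1 := Finset.card_filter_add_card_filter_not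
      (s := (Finset.univ : Finset (Fin (2*k+1)))) (p := fun i => w i = 0)
    have h2 : (Finset.univ.filter (fun i : Fin (2*k+1) => ¬ (w i = 0))).card = k + 1 := by
      rw [← hwt, wt_eq]
    rw [Finset.card_univ, Fintype.card_fin, ← hZf] at h1
    omega
  set e := Finset.equivFinOfCardEq hZcard with he
  set z : Fin k → Fin (2*k+1) := fun t => (e.symm t : Fin (2*k+1)) with hz
  have hzinj : Function.Injective z := by
    intro t1 t2 h
    have := Subtype.ext h (p := fun i => i ∈ Zf)
    exact e.symm.injective this
  have hzw : ∀ t, w (z t) = 0 := by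
    intro t
    have : (z t) ∈ Zf := (e.symm t).2
    exact (Finset.mem_filter.mp this).2
  set π : (Fin k → F) →ₗ[F] (Fin k → F) := (LinearMap.funLeft F F z).comp (Lmap k a v) with hπ
  have hπc0 : π c0 = 0 := by
    funext t
    show w (z t) = 0
    exact hzw t
  have hnotinj : ¬ Function.Injective π := by
    intro hinj
    exact hc0 (hinj (by rw [hπc0, map_zero]))
  have hnotsurj : ¬ Function.Surjective π :=
    fun hs => hnotinj (LinearMap.injective_iff_surjective.mpr hs)
  unfold Function.Surjective at hnotsurj
  push_neg at hnotsurj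
  obtain ⟨x0, hx0⟩ := hnotsurj
  have hx0' : x0 ∉ LinearMap.range π := by
    rw [LinearMap.mem_range]
    push_neg
    exact hx0
  obtain ⟨φ, hφx0, hφmap⟩ := Submodule.exists_dual_map_eq_bot_of_notMem hx0' inferInstance
  have hφ0 : ∀ c : Fin k → F, φ (π c) = 0 := by
    intro c
    have : φ (π c) ∈ Submodule.map φ (LinearMap.range π) :=
      Submodule.mem_map_of_mem (LinearMap.mem_range_self π c)
    rw [hφmap] at this
    exact this
  set y' : Fin k → F := fun t => φ (fun j => if t = j then 1 else 0) with hy'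
  have hkey : ∀ x : Fin k → F, φ x = ∑ t, x t * y' t := by
    intro x
    conv_lhs => rw [pi_eq_sum_univ x]
    rw [map_sum]
    refine Finset.sum_congr rfl (fun t _ => ?_)
    rw [map_smul, smul_eq_mul]
  set y : Fin (2*k+1) → F := fun idx => ∑ t, if z t = idx then y' t else 0 with hy
  have hyz : ∀ t, y (z t) = y' t := by
    intro t
    rw [hy]
    have : ∀ t' : Fin k, (if z t' = z t then y' t' else 0) = (if t' = t then y' t' else 0) := by
      intro t'
      congr 1
      simp [hzinj.eq_iff]
    simp only []
    rw [Finset.sum_congr rfl (fun t' _ => this t'), Finset.sum_ite_eq' Finset.univ t y']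
    simp
  refine ⟨y, ?_, ?_, ?_⟩
  · intro x hx
    rw [codeSet_eq_range k (by omega) a v] at hx
    obtain ⟨c, rfl⟩ := hx
    have hswap : ∑ idx, Lmap k a v c idx * y idx = ∑ t, Lmap k a v c (z t) * y' t := by
      rw [hy]
      simp only []
      have : ∀ idx, Lmap k a v c idx * (∑ t, if z t = idx then y' t else 0)
          = ∑ t, (if z t = idx then Lmap k a v c idx * y' t else 0) := by
        intro idx
        rw [Finset.mul_sum]
        exact Finset.sum_congr rfl (fun t _ => by rw [mul_ite, mul_zero])
      rw [Finset.sum_congr rfl (fun idx _ => this idx), Finset.sum_comm]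
      refine Finset.sum_congr rfl (fun t _ => ?_)
      rw [Finset.sum_ite_eq Finset.univ (z t) (fun idx => Lmap k a v c idx * y' t)]
      simp
    rw [hswap]
    have : ∀ t, Lmap k a v c (z t) = π c t := fun t => rfl
    rw [Finset.sum_congr rfl (fun t _ => by rw [this t])]
    rw [← hkey (π c)]
    exact hφ0 c
  · have : ∃ t, y' t ≠ 0 := by
      by_contra hall
      push_neg at hall
      apply hφx0
      rw [hkey x0]
      exact Finset.sum_eq_zero (fun t _ => by rw [hall t, mul_zero])
    obtain ⟨t, ht⟩ := this
    intro hy0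
    apply ht
    rw [← hyz t, hy0]
    rfl
  · rw [wt_eq]
    have hsub : (Finset.univ.filter fun idx => y idx ≠ 0) ⊆ Finset.univ.image z := by
      intro idx hidx
      have hne := (Finset.mem_filter.mp hidx).2
      by_contra hnotmem
      apply hne
      rw [hy]
      refine Finset.sum_eq_zero (fun t _ => ?_)
      have : ¬ (z t = idx) := fun h => hnotmem (Finset.mem_image.mpr ⟨t, Finset.mem_univ _, h⟩)
      rw [if_neg this]
    have := Finset.card_le_card hsub
    rw [Finset.card_image_of_injective _ hzinj, Finset.card_univ, Fintype.card_fin] at this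
    exact this

theorem stmt17 {F : Type*} [Field F] [Fintype F] (p r m k : ℕ) (hp : p.Prime)
    (hr : 0 < r) (hm : 0 < m) (hrm : r ∣ m) (heven : 2 ∣ m / r)
    (hcard : Fintype.card F = p ^ m)
    (hk3 : 3 ≤ k) (hk : k ≤ p ^ r / 2)
    (a : Fin (2 * k) → F) (ha : Function.Injective a)
    (hsub : ∀ i, a i ^ (p ^ r) = a i)
    (hsum : ∑ i, a i ≠ 0)
    (lam : F) (hlam : lam = (-(∑ i, a i))⁻¹) :
    (∀ i, ∃ w : F, w ^ 2 = lam * uCoeff a i) ∧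
      ∀ v : Fin (2 * k) → F, (∀ i, v i ≠ 0) → (∀ i, v i ^ 2 = lam * uCoeff a i) →
        (codeSet a v k ⊆ dualSet (codeSet a v k) ∧
          Module.finrank F (Submodule.span F (codeSet a v k)) = k ∧
          (IsMinDist (codeSet a v k) (k + 2) ∨
            (IsMinDist (codeSet a v k) (k + 1) ∧
              IsMinDist (dualSet (codeSet a v k)) k))) := by
  haveI hchar : CharP F p := charP_of_card hp hm hcard
  haveI : ExpChar F p := ExpChar.prime hp
  have hfix : ∀ i, (lam * uCoeff a i) ^ (p ^ r) = lam * uCoeff a i := by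
    intro i
    have hev : ∀ x : F, iterateFrobenius F p r x = x ^ (p ^ r) :=
      fun x => iterateFrobenius_def p r x
    have hφa : ∀ j, iterateFrobenius F p r (a j) = a j := fun j => by rw [hev]; exact hsub j
    have h1 : iterateFrobenius F p r lam = lam := by
      rw [hlam, map_inv₀, map_neg, map_sum]
      have : ∑ j, iterateFrobenius F p r (a j) = ∑ j, a j :=
        Finset.sum_congr rfl (fun j _ => hφa j)
      rw [this]
    have h2 : iterateFrobenius F p r (uCoeff a i) = uCoeff a i := by
      rw [uCoeff, map_prod]
      refine Finset.prod_congr rfl (fun j _ => ?_)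
      rw [map_inv₀, map_sub, hφa, hφa]
    calc (lam * uCoeff a i) ^ (p ^ r) = iterateFrobenius F p r (lam * uCoeff a i) :=
          (hev _).symm
      _ = lam * uCoeff a i := by rw [map_mul, h1, h2]
  constructor
  · intro i
    exact exists_sqrt_of_fixed hp hr hm hrm heven hcard _ (hfix i)
  intro v hv hv2
  have hk2 : 2 ≤ k := by omega
  refine ⟨?_, ?_, ?_⟩
  · -- self-orthogonality
    rintro x ⟨f, hf, hfc, rfl⟩ x' ⟨g, hg, hgc, rfl⟩
    exact self_orth k hk3 a v ha hsum lam hlam hv2 g f hg hgc hf hfc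
  · -- dimension
    rw [codeSet_eq_range k hk2 a v, ← LinearMap.coe_range, Submodule.span_eq,
      LinearMap.finrank_range_of_inj (Lmap_injective k hk3 a v ha hv), Module.finrank_pi,
      Fintype.card_fin]
  · by_cases hbig : ∀ w ∈ codeSet a v k, w ≠ 0 → k + 2 ≤ wt w
    · left
      obtain ⟨c, hcne, hcw⟩ := exists_low_weight k hk3 a v
      have hmem : Lmap k a v c ∈ codeSet a v k := by
        rw [codeSet_eq_range k hk2]; exact ⟨c, rfl⟩
      have hwne : Lmap k a v c ≠ 0 :=
        fun h => hcne (Lmap_injective k hk3 a v ha hv (by rw [h, map_zero]))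
      exact ⟨⟨_, hmem, hwne, le_antisymm hcw (hbig _ hmem hwne)⟩, hbig⟩
    · right
      push_neg at hbig
      obtain ⟨w0, hw0mem, hw0ne, hw0lt⟩ := hbig
      have hmem' := hw0mem
      rw [codeSet_eq_range k hk2] at hmem'
      obtain ⟨c0, rfl⟩ := hmem'
      have hc0 : c0 ≠ 0 := fun h => hw0ne (by rw [h, map_zero])
      have hlow := (wt_lower k hk3 a v ha hv c0 hc0).1
      have hwt0 : wt (Lmap k a v c0) = k + 1 := by omega
      have lbC : ∀ w ∈ codeSet a v k, w ≠ 0 → k + 1 ≤ wt w := by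
        intro w hwmem hne
        rw [codeSet_eq_range k hk2] at hwmem
        obtain ⟨c, rfl⟩ := hwmem
        exact (wt_lower k hk3 a v ha hv c (fun h => hne (by rw [h, map_zero]))).1
      refine ⟨⟨⟨_, hw0mem, hw0ne, hwt0⟩, lbC⟩, ?_⟩
      have lbD : ∀ y ∈ dualSet (codeSet a v k), y ≠ 0 → k ≤ wt y := by
        intro y hy hne
        by_contra hlt
        push_neg at hlt
        exact hne (dual_lb k hk3 a v ha hv y hy hlt)
      obtain ⟨y, hymem, hyne, hyle⟩ := exists_dual_low k hk3 a v c0 hc0 hwt0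
      exact ⟨⟨y, hymem, hyne, le_antisymm hyle (lbD y hymem hyne)⟩, lbD⟩
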